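/- (Proposition 2) For any integer k ≥ 2, the measure on [0,1] with density ρ⁽ᵏ⁾ with respect to Lebesgue measure, where ρ⁽ᵏ⁾(x) = (2^k + 2)/3 for x ∈ [0, 2^(−k)) and ρ⁽ᵏ⁾(x) = 2/3 for x ∈ [2^(−k), 1], is an invariant probability measure for the map φ_k; that is, the pushforward of this measure under φ_k equals the measure itself. -/

import Mathlib

open MeasureTheory
open scoped ENNReal

/-- The infinitely piecewise linear map `φ_k` on `[0,1]`:
`φ_k(x) = 2^(1-k) (x - 1/2)` for `x ∈ [1/2, 1]`,
`φ_k(x) = 2^i (x - 2^(-i))` for `x ∈ [2^(-i), 2^(1-i))`, `i ≥ 2`, and `φ_k(0) = 0`. -/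
noncomputable def phi (k : ℕ) (x : ℝ) : ℝ :=
  if x = 0 then 0
  else if (1 : ℝ) / 2 ≤ x then (2 : ℝ) ^ ((1 : ℤ) - k) * (x - 1 / 2)
  else (2 : ℝ) ^ (-(Int.log 2 x)) * (x - (2 : ℝ) ^ (Int.log 2 x))

/-- The density `ρᵏ` for `k ≥ 2`: `(2^k + 2)/3` on `[0, 2^(-k))` and `2/3` on `[2^(-k), 1]`. -/
noncomputable def rhok (k : ℕ) (x : ℝ) : ENNReal :=
  if x < (2 : ℝ) ^ (-(k : ℤ)) then ENNReal.ofReal (((2 : ℝ) ^ k + 2) / 3)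
  else ENNReal.ofReal (2 / 3)

/-- The measure on `[0,1]` with density `ρᵏ` with respect to Lebesgue measure. -/
noncomputable def muk (k : ℕ) : Measure ℝ :=
  (volume.restrict (Set.Icc (0 : ℝ) 1)).withDensity (rhok k)

namespace StmtAux

open Set

lemma two_zpow_pos (z : ℤ) : (0:ℝ) < 2 ^ z := zpow_pos (by norm_num) z

lemma ofReal_two_zpow (z : ℤ) : ENNReal.ofReal ((2:ℝ) ^ z) = (2:ℝ≥0∞) ^ z := by
  obtain ⟨n, rfl | rfl⟩ := z.eq_nat_or_neg
  · rw [zpow_natCast, zpow_natCast, ENNReal.ofReal_pow (by norm_num)]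
    norm_num
  · rw [zpow_neg, ENNReal.zpow_neg, zpow_natCast, zpow_natCast,
      ENNReal.ofReal_inv_of_pos (by positivity), ENNReal.ofReal_pow (by norm_num)]
    norm_num

lemma log2_zpow (z : ℤ) : Int.log 2 ((2:ℝ)^z) = z := by
  have h : ((2:ℕ):ℝ) = (2:ℝ) := by norm_num
  rw [← h]
  exact Int.log_zpow (by norm_num) z

lemma zpow_log2_le {x : ℝ} (hx : 0 < x) : (2:ℝ)^(Int.log 2 x) ≤ x := by
  have h : ((2:ℕ):ℝ) = (2:ℝ) := by norm_num
  rw [← h]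
  exact Int.zpow_log_le_self (by norm_num) hx

lemma lt_zpow_log2_succ (x : ℝ) : x < (2:ℝ)^(Int.log 2 x + 1) := by
  have h : ((2:ℕ):ℝ) = (2:ℝ) := by norm_num
  rw [← h]
  exact Int.lt_zpow_succ_log_self (by norm_num) x

lemma lt_zpow2_iff {x : ℝ} (hx : 0 < x) {z : ℤ} : x < (2:ℝ)^z ↔ Int.log 2 x < z := by
  have h : ((2:ℕ):ℝ) = (2:ℝ) := by norm_num
  rw [← h]
  exact Int.lt_zpow_iff_log_lt (by norm_num) hx

lemma le_log2 {x : ℝ} {z : ℤ} (hx : (2:ℝ)^z ≤ x) : z ≤ Int.log 2 x := by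
  have := Int.log_mono_right (b := 2) (two_zpow_pos z) hx
  rwa [log2_zpow] at this

lemma measurable_intLog : Measurable fun x : ℝ => Int.log 2 x := by
  apply measurable_to_countable'
  intro n
  have hset : (fun x : ℝ => Int.log 2 x) ⁻¹' {n} =
      Ico ((2:ℝ)^n) ((2:ℝ)^(n+1)) ∪ (if n = 0 then Iic (0:ℝ) else ∅) := by
    ext x
    simp only [mem_preimage, mem_singleton_iff, mem_union, mem_Ico]
    rcases le_or_gt x 0 with hx | hx
    · rw [Int.log_of_right_le_zero _ hx]
      have h1 : ¬ ((2:ℝ)^n ≤ x) := not_le.2 (lt_of_le_of_lt hx (two_zpow_pos n))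
      split_ifs with hn
      · simp [hn, hx, h1]
      · simp [h1, Ne.symm hn, eq_comm]
    · have hmain : Int.log 2 x = n ↔ ((2:ℝ)^n ≤ x ∧ x < (2:ℝ)^(n+1)) := by
        constructor
        · rintro rfl
          exact ⟨zpow_log2_le hx, lt_zpow_log2_succ x⟩
        · rintro ⟨hle, hlt⟩
          have h1 : n ≤ Int.log 2 x := le_log2 hle
          have h2 : Int.log 2 x < n + 1 := (lt_zpow2_iff hx).1 hlt
          omega
      split_ifs with hn
      · simp only [mem_Iic, hmain]
        constructor
        · exact Or.inl
        · rintro (h | h)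
          · exact h
          · exact absurd hx (not_lt.2 h)
      · simp [hmain]
  rw [hset]
  refine MeasurableSet.union measurableSet_Ico ?_
  split_ifs
  · exact measurableSet_Iic
  · exact MeasurableSet.empty

lemma measurable_phi (k : ℕ) : Measurable (phi k) := by
  unfold phi
  refine Measurable.ite (measurableSet_eq) measurable_const ?_
  refine Measurable.ite (measurableSet_le measurable_const measurable_id) ?_ ?_
  · exact (measurable_id.sub_const _).const_mul _
  · have h1 : Measurable fun x : ℝ => (2:ℝ) ^ (-(Int.log 2 x)) :=
      (measurable_from_top (f := fun n : ℤ => (2:ℝ) ^ (-n))).comp measurable_intLog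
    have h2 : Measurable fun x : ℝ => (2:ℝ) ^ (Int.log 2 x) :=
      (measurable_from_top (f := fun n : ℤ => (2:ℝ) ^ n)).comp measurable_intLog
    exact h1.mul (measurable_id.sub h2)

lemma log_piece {z : ℤ} {x : ℝ} (hx : x ∈ Ico ((2:ℝ)^(z-1)) ((2:ℝ)^z)) :
    Int.log 2 x = z - 1 := by
  have hx0 : 0 < x := lt_of_lt_of_le (two_zpow_pos _) hx.1
  have h1 : z - 1 ≤ Int.log 2 x := le_log2 hx.1
  have h2 : Int.log 2 x < z := (lt_zpow2_iff hx0).1 hx.2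
  omega

lemma phi_piece (k : ℕ) {z : ℤ} (hz : z ≤ -1) {x : ℝ}
    (hx : x ∈ Ico ((2:ℝ)^(z-1)) ((2:ℝ)^z)) :
    phi k x = (2:ℝ)^(1-z) * (x - (2:ℝ)^(z-1)) := by
  have hx0 : 0 < x := lt_of_lt_of_le (two_zpow_pos _) hx.1
  have hlt : x < 1/2 := by
    calc x < (2:ℝ)^z := hx.2
    _ ≤ (2:ℝ)^(-1:ℤ) := zpow_le_zpow_right₀ (by norm_num) hz
    _ = 1/2 := by norm_num
  rw [phi, if_neg hx0.ne', if_neg (not_le.2 hlt), log_piece hx]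
  ring_nf

lemma phi_top (k : ℕ) {x : ℝ} (hx : x ∈ Icc (1/2 : ℝ) 1) :
    phi k x = (2:ℝ)^((1:ℤ)-k) * (x - 1/2) := by
  rw [phi, if_neg (by linarith [hx.1]), if_pos hx.1]

lemma map_affine (c b : ℝ) (hc : c ≠ 0) :
    Measure.map (fun x : ℝ => c * (x - b)) volume = ENNReal.ofReal |c⁻¹| • volume := by
  have hfun : (fun x : ℝ => c * (x - b)) = (fun x : ℝ => c * x) ∘ (fun x : ℝ => x + (-b)) := by
    funext x; simp [sub_eq_add_neg]
  rw [hfun, ← Measure.map_map (measurable_const_mul c) (measurable_add_const (-b)),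
    map_add_right_eq_self volume (-b), Real.map_volume_mul_left hc]

lemma map_affine_restrict (c b : ℝ) (hc : 0 < c) {J : Set ℝ} (hJ : MeasurableSet J) :
    Measure.map (fun x : ℝ => c * (x - b))
      (volume.restrict ((fun x : ℝ => c * (x - b)) ⁻¹' J)) =
      ENNReal.ofReal c⁻¹ • volume.restrict J := by
  have hm : Measurable fun x : ℝ => c * (x - b) := (measurable_id.sub_const b).const_mul c
  rw [← Measure.restrict_map hm hJ, map_affine c b hc.ne', Measure.restrict_smul,
    abs_of_pos (inv_pos.2 hc)]

lemma preimage_piece (z : ℤ) :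
    (fun x : ℝ => (2:ℝ)^(1-z) * (x - (2:ℝ)^(z-1))) ⁻¹' (Ico 0 1) =
      Ico ((2:ℝ)^(z-1)) ((2:ℝ)^z) := by
  ext x
  have hc : (0:ℝ) < 2^(1-z) := two_zpow_pos _
  have hp : (0:ℝ) < 2^(z-1) := two_zpow_pos _
  have hpc : (2:ℝ)^(1-z) * (2:ℝ)^(z-1) = 1 := by
    rw [← zpow_add₀ (by norm_num : (2:ℝ) ≠ 0)]; norm_num
  have h2 : (2:ℝ)^z = 2 * (2:ℝ)^(z-1) := by
    rw [show z = 1 + (z-1) by ring, zpow_add₀ (by norm_num : (2:ℝ) ≠ 0)]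
    norm_num
  simp only [mem_preimage, mem_Ico]
  constructor
  · rintro ⟨h0, h1⟩
    constructor
    · nlinarith
    · nlinarith
  · rintro ⟨h0, h1⟩
    constructor
    · nlinarith
    · nlinarith

lemma preimage_top (k : ℕ) :
    (fun x : ℝ => (2:ℝ)^((1:ℤ)-k) * (x - 1/2)) ⁻¹' (Icc 0 ((2:ℝ)^(-(k:ℤ)))) =
      Icc (1/2:ℝ) 1 := by
  ext x
  have hc : (0:ℝ) < 2^((1:ℤ)-k) := two_zpow_pos _
  have hkey : (2:ℝ)^((1:ℤ)-k) * (1/2) = (2:ℝ)^(-(k:ℤ)) := by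
    rw [show ((1:ℤ)-k) = -(k:ℤ) + 1 by ring, zpow_add₀ (by norm_num : (2:ℝ) ≠ 0)]
    ring
  simp only [mem_preimage, mem_Icc]
  constructor
  · rintro ⟨h0, h1⟩
    constructor
    · nlinarith
    · nlinarith
  · rintro ⟨h0, h1⟩
    constructor
    · nlinarith
    · nlinarith

lemma map_piece (k : ℕ) {z : ℤ} (hz : z ≤ -1) :
    Measure.map (phi k) (volume.restrict (Ico ((2:ℝ)^(z-1)) ((2:ℝ)^z))) =
      (2:ℝ≥0∞)^(z-1) • volume.restrict (Ico (0:ℝ) 1) := by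
  have hae : phi k =ᵐ[volume.restrict (Ico ((2:ℝ)^(z-1)) ((2:ℝ)^z))]
      (fun x : ℝ => (2:ℝ)^(1-z) * (x - (2:ℝ)^(z-1))) :=
    (ae_restrict_iff' measurableSet_Ico).2 (Filter.Eventually.of_forall fun x hx => phi_piece k hz hx)
  rw [Measure.map_congr hae, ← preimage_piece z,
    map_affine_restrict _ _ (two_zpow_pos _) measurableSet_Ico,
    ← zpow_neg, show -(1-z) = z - 1 by ring, ofReal_two_zpow]

lemma map_top (k : ℕ) :
    Measure.map (phi k) (volume.restrict (Icc (1/2:ℝ) 1)) =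
      (2:ℝ≥0∞)^((k:ℤ)-1) • volume.restrict (Icc (0:ℝ) ((2:ℝ)^(-(k:ℤ)))) := by
  have hae : phi k =ᵐ[volume.restrict (Icc (1/2:ℝ) 1)]
      (fun x : ℝ => (2:ℝ)^((1:ℤ)-k) * (x - 1/2)) :=
    (ae_restrict_iff' measurableSet_Icc).2 (Filter.Eventually.of_forall fun x hx => phi_top k hx)
  rw [Measure.map_congr hae, ← preimage_top k,
    map_affine_restrict _ _ (two_zpow_pos _) measurableSet_Icc,
    ← zpow_neg, show -((1:ℤ)-k) = (k:ℤ) - 1 by ring, ofReal_two_zpow]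

lemma iUnion_pieces (z : ℤ) :
    (⋃ n : ℕ, Ico ((2:ℝ)^(z-(n:ℤ)-1)) ((2:ℝ)^(z-(n:ℤ)))) = Ioo 0 ((2:ℝ)^z) := by
  ext x
  simp only [mem_iUnion, mem_Ico, mem_Ioo]
  constructor
  · rintro ⟨n, h1, h2⟩
    refine ⟨lt_of_lt_of_le (two_zpow_pos _) h1, lt_of_lt_of_le h2 ?_⟩
    exact zpow_le_zpow_right₀ (by norm_num) (by omega)
  · rintro ⟨h0, h1⟩
    have hm : Int.log 2 x < z := (lt_zpow2_iff h0).1 h1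
    refine ⟨(z - 1 - Int.log 2 x).toNat, ?_, ?_⟩
    · rw [show z - ((z - 1 - Int.log 2 x).toNat : ℤ) - 1 = Int.log 2 x by omega]
      exact zpow_log2_le h0
    · rw [show z - ((z - 1 - Int.log 2 x).toNat : ℤ) = Int.log 2 x + 1 by omega]
      exact lt_zpow_log2_succ x

lemma disj_pieces (z : ℤ) :
    Pairwise (Function.onFun Disjoint fun n : ℕ => Ico ((2:ℝ)^(z-(n:ℤ)-1)) ((2:ℝ)^(z-(n:ℤ)))) := by
  have key : ∀ i j : ℕ, i < j →
      Disjoint (Ico ((2:ℝ)^(z-(i:ℤ)-1)) ((2:ℝ)^(z-(i:ℤ))))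
        (Ico ((2:ℝ)^(z-(j:ℤ)-1)) ((2:ℝ)^(z-(j:ℤ)))) := by
    intro i j hij
    rw [Set.disjoint_left]
    rintro x ⟨hx1, _⟩ ⟨_, hx4⟩
    have : (2:ℝ)^(z-(j:ℤ)) ≤ (2:ℝ)^(z-(i:ℤ)-1) :=
      zpow_le_zpow_right₀ (by norm_num) (by omega)
    linarith
  intro i j hij
  rcases lt_or_gt_of_ne hij with h | h
  · exact key i j h
  · exact (key j i h).symm

lemma map_sum' {f : ℝ → ℝ} (hf : Measurable f) (μ : ℕ → Measure ℝ) :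
    Measure.map f (Measure.sum μ) = Measure.sum fun n => Measure.map f (μ n) := by
  ext s hs
  rw [Measure.map_apply hf hs, Measure.sum_apply _ (hf hs), Measure.sum_apply _ hs]
  exact tsum_congr fun n => (Measure.map_apply hf hs).symm

lemma sum_smul_measure (a : ℕ → ℝ≥0∞) (μ : Measure ℝ) :
    (Measure.sum fun n => a n • μ) = (∑' n, a n) • μ := by
  ext s hs
  rw [Measure.sum_apply _ hs]
  simp only [Measure.smul_apply, smul_eq_mul]
  exact ENNReal.tsum_mul_right

lemma tsum_two_zpow (z : ℤ) : (∑' n : ℕ, (2:ℝ≥0∞)^(z-(n:ℤ)-1)) = (2:ℝ≥0∞)^z := by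
  have h2 : (2:ℝ≥0∞) ≠ 0 := by norm_num
  have h2' : (2:ℝ≥0∞) ≠ ⊤ := by norm_num
  have step : ∀ n : ℕ, (2:ℝ≥0∞)^(z-(n:ℤ)-1) = (2:ℝ≥0∞)^(z-1) * ((2:ℝ≥0∞)⁻¹)^n := by
    intro n
    rw [show z-(n:ℤ)-1 = (z-1) + (-(n:ℤ)) by ring, ENNReal.zpow_add h2 h2',
      ENNReal.zpow_neg, zpow_natCast, ← ENNReal.inv_pow]
  simp_rw [step]
  rw [ENNReal.tsum_mul_left, ENNReal.tsum_geometric, ENNReal.one_sub_inv_two, inv_inv]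
  conv_rhs => rw [show z = (z-1) + 1 by ring]
  rw [ENNReal.zpow_add h2 h2', zpow_one]

lemma map_Ioo (k : ℕ) {z : ℤ} (hz : z ≤ -1) :
    Measure.map (phi k) (volume.restrict (Ioo (0:ℝ) ((2:ℝ)^z))) =
      (2:ℝ≥0∞)^z • volume.restrict (Ico (0:ℝ) 1) := by
  rw [← iUnion_pieces z, Measure.restrict_iUnion (disj_pieces z) (fun n => measurableSet_Ico),
    map_sum' (measurable_phi k)]
  have step : ∀ n : ℕ,
      Measure.map (phi k) (volume.restrict (Ico ((2:ℝ)^(z-(n:ℤ)-1)) ((2:ℝ)^(z-(n:ℤ))))) =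
        (2:ℝ≥0∞)^(z-(n:ℤ)-1) • volume.restrict (Ico (0:ℝ) 1) := by
    intro n
    exact map_piece k (show z - (n:ℤ) ≤ -1 by omega)
  simp_rw [step]
  rw [sum_smul_measure, tsum_two_zpow]

lemma map_A (k : ℕ) :
    Measure.map (phi k) (volume.restrict (Icc (0:ℝ) 1)) =
      (2:ℝ≥0∞)^((k:ℤ)-1) • volume.restrict (Icc (0:ℝ) ((2:ℝ)^(-(k:ℤ)))) +
      (2:ℝ≥0∞)^(-1:ℤ) • volume.restrict (Ico (0:ℝ) 1) := by
  have hsplit : Ioc (0:ℝ) 1 = Ioo 0 ((2:ℝ)^(-1:ℤ)) ∪ Icc (1/2) 1 := by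
    ext x
    simp only [mem_Ioc, mem_union, mem_Ioo, mem_Icc]
    constructor
    · rintro ⟨h0, h1⟩
      rcases lt_or_ge x (1/2) with h | h
      · left; exact ⟨h0, by norm_num; linarith⟩
      · right; exact ⟨h, h1⟩
    · rintro (⟨h0, h1⟩ | ⟨h0, h1⟩)
      · have : (2:ℝ)^(-1:ℤ) = 1/2 := by norm_num
        exact ⟨h0, by linarith [this ▸ h1]⟩
      · exact ⟨by linarith, h1⟩
  have hdisj : Disjoint (Ioo (0:ℝ) ((2:ℝ)^(-1:ℤ))) (Icc (1/2) 1) := by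
    rw [Set.disjoint_left]
    rintro x ⟨_, hx2⟩ ⟨hx3, _⟩
    have : (2:ℝ)^(-1:ℤ) = 1/2 := by norm_num
    rw [this] at hx2
    linarith
  rw [Measure.restrict_congr_set (Ioc_ae_eq_Icc).symm, hsplit,
    Measure.restrict_union hdisj measurableSet_Icc,
    Measure.map_add _ _ (measurable_phi k), map_Ioo k le_rfl, map_top k, add_comm]

lemma map_B (k : ℕ) (hk : 2 ≤ k) :
    Measure.map (phi k) (volume.restrict (Ico (0:ℝ) ((2:ℝ)^(-(k:ℤ))))) =
      (2:ℝ≥0∞)^(-(k:ℤ)) • volume.restrict (Ico (0:ℝ) 1) := by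
  rw [Measure.restrict_congr_set (Ioo_ae_eq_Ico).symm]
  exact map_Ioo k (by omega)

lemma muk_eq (k : ℕ) (hk : 2 ≤ k) :
    muk k = (2 * ENNReal.ofReal (1/3)) • volume.restrict (Icc (0:ℝ) 1) +
      ((2:ℝ≥0∞)^(k:ℤ) * ENNReal.ofReal (1/3)) •
        volume.restrict (Ico (0:ℝ) ((2:ℝ)^(-(k:ℤ)))) := by
  have hr : rhok k = (fun _ : ℝ => ENNReal.ofReal (2/3)) +
      (Iio ((2:ℝ)^(-(k:ℤ)))).indicator (fun _ => ENNReal.ofReal ((2:ℝ)^k/3)) := by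
    funext x
    simp only [Pi.add_apply, rhok]
    split_ifs with h
    · rw [Set.indicator_of_mem (show x ∈ Iio ((2:ℝ)^(-(k:ℤ))) from h),
        ← ENNReal.ofReal_add (by norm_num) (by positivity)]
      congr 1
      ring
    · rw [Set.indicator_of_notMem (show x ∉ Iio ((2:ℝ)^(-(k:ℤ))) from h), add_zero]
  have hIico : Iio ((2:ℝ)^(-(k:ℤ))) ∩ Icc (0:ℝ) 1 = Ico (0:ℝ) ((2:ℝ)^(-(k:ℤ))) := by
    have hle1 : (2:ℝ)^(-(k:ℤ)) ≤ 1 := by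
      have := zpow_le_zpow_right₀ (by norm_num : (1:ℝ) ≤ 2) (show -(k:ℤ) ≤ 0 by omega)
      simpa using this
    ext x
    simp only [mem_inter_iff, mem_Iio, mem_Icc, mem_Ico]
    constructor
    · rintro ⟨h1, h2, _⟩; exact ⟨h2, h1⟩
    · rintro ⟨h1, h2⟩; exact ⟨h2, h1, by linarith⟩
  have hc1 : ENNReal.ofReal (2/3) = 2 * ENNReal.ofReal (1/3) := by
    rw [show (2:ℝ)/3 = 2 * (1/3) by norm_num, ENNReal.ofReal_mul (by norm_num)]
    norm_num
  have hc2 : ENNReal.ofReal ((2:ℝ)^k/3) = (2:ℝ≥0∞)^(k:ℤ) * ENNReal.ofReal (1/3) := by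
    rw [show (2:ℝ)^k/3 = (2:ℝ)^k * (1/3) by ring, ENNReal.ofReal_mul (by positivity),
      ENNReal.ofReal_pow (by norm_num), zpow_natCast]
    norm_num
  rw [muk, hr, withDensity_add_left measurable_const, withDensity_const,
    withDensity_indicator measurableSet_Iio, withDensity_const,
    Measure.restrict_restrict measurableSet_Iio, hIico, hc1, hc2]

end StmtAux

open StmtAux Set

/-- (Proposition 2) For any integer `k ≥ 2`, the measure with density
`ρᵏ(x) = (2^k + 2)/3` on `[0, 2^(-k))` and `2/3` on `[2^(-k), 1]`
is an invariant probability measure for `φ_k`. -/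
theorem stmt_2 (k : ℕ) (hk : 2 ≤ k) :
    Measure.map (phi k) (muk k) = muk k ∧ IsProbabilityMeasure (muk k) := by
  have h2 : (2:ℝ≥0∞) ≠ 0 := by norm_num
  have h2' : (2:ℝ≥0∞) ≠ ⊤ := by norm_num
  set c3 : ℝ≥0∞ := ENNReal.ofReal (1/3) with hc3
  have hmeq := muk_eq k hk
  have hICO : volume.restrict (Ico (0:ℝ) 1) = volume.restrict (Icc (0:ℝ) 1) :=
    Measure.restrict_congr_set Ico_ae_eq_Icc
  have hICC : volume.restrict (Icc (0:ℝ) ((2:ℝ)^(-(k:ℤ)))) =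
      volume.restrict (Ico (0:ℝ) ((2:ℝ)^(-(k:ℤ)))) :=
    (Measure.restrict_congr_set Ico_ae_eq_Icc).symm
  constructor
  · rw [hmeq, Measure.map_add _ _ (measurable_phi k), Measure.map_smul, Measure.map_smul,
      map_A k, map_B k hk, smul_add, smul_smul, smul_smul, smul_smul]
    have key1 : (2:ℝ≥0∞) * (2:ℝ≥0∞)^((k:ℤ)-1) = (2:ℝ≥0∞)^(k:ℤ) := by
      conv_rhs => rw [show (k:ℤ) = 1 + ((k:ℤ)-1) by ring]
      rw [ENNReal.zpow_add h2 h2', zpow_one]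
    have key2 : (2:ℝ≥0∞) * (2:ℝ≥0∞)^(-1:ℤ) = 1 := by
      have : (2:ℝ≥0∞) * (2:ℝ≥0∞)^(-1:ℤ) = (2:ℝ≥0∞)^((1:ℤ) + (-1:ℤ)) := by
        rw [ENNReal.zpow_add h2 h2', zpow_one]
      rw [this, show (1:ℤ) + (-1:ℤ) = 0 by ring, zpow_zero]
    have key3 : (2:ℝ≥0∞)^(k:ℤ) * (2:ℝ≥0∞)^(-(k:ℤ)) = 1 := by
      rw [← ENNReal.zpow_add h2 h2', show (k:ℤ) + -(k:ℤ) = 0 by ring, zpow_zero]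
    have e1 : 2 * c3 * (2:ℝ≥0∞)^((k:ℤ)-1) = (2:ℝ≥0∞)^(k:ℤ) * c3 := by
      rw [mul_right_comm, key1]
    have e2 : 2 * c3 * (2:ℝ≥0∞)^(-1:ℤ) = c3 := by
      rw [mul_right_comm, key2, one_mul]
    have e3 : (2:ℝ≥0∞)^(k:ℤ) * c3 * (2:ℝ≥0∞)^(-(k:ℤ)) = c3 := by
      rw [mul_right_comm, key3, one_mul]
    rw [e1, e2, e3, hICC, hICO]
    rw [add_assoc, ← add_smul, show c3 + c3 = 2 * c3 by ring, add_comm]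
  · constructor
    rw [hmeq]
    simp only [Measure.add_apply, Measure.smul_apply, smul_eq_mul,
      Measure.restrict_apply_univ]
    have key3 : (2:ℝ≥0∞)^(k:ℤ) * (2:ℝ≥0∞)^(-(k:ℤ)) = 1 := by
      rw [← ENNReal.zpow_add h2 h2', show (k:ℤ) + -(k:ℤ) = 0 by ring, zpow_zero]
    rw [Real.volume_Icc, Real.volume_Ico, sub_zero, sub_zero, ENNReal.ofReal_one, mul_one,
      ofReal_two_zpow, mul_right_comm, key3, one_mul]
    rw [two_mul, ← ENNReal.ofReal_add (by norm_num) (by norm_num),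
      ← ENNReal.ofReal_add (by norm_num) (by norm_num)]
    norm_num
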